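/- If α is a Pisot number of degree greater than 2 over ℚ, then ℚ(α) = ℚ(α + α⁻¹). -/

import Mathlib

open Polynomial IntermediateField

private lemma recip_root (p : ℚ[X]) (hmonic : p.Monic) (hirr : Irreducible p)
    (x : ℂ) (hx0 : x ≠ 0) (hx : Polynomial.aeval x p = 0) (hxinv : Polynomial.aeval x⁻¹ p = 0)
    (β : ℂ) (hβ0 : β ≠ 0) (hβ : Polynomial.aeval β p = 0) :
    Polynomial.aeval β⁻¹ p = 0 := by
  have hminp : minpoly ℚ x⁻¹ = p := (minpoly.eq_of_irreducible_of_monic hirr hxinv hmonic).symm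
  have hrev : ∀ y : ℂ, y ≠ 0 → Polynomial.aeval y p = 0 → Polynomial.aeval y⁻¹ (p.reverse) = 0 := by
    intro y hy0 hy
    letI := invertibleOfNonzero hy0
    have := (Polynomial.eval₂_reverse_eq_zero_iff (algebraMap ℚ ℂ) y p).mpr (by rwa [aeval_def] at hy)
    rwa [invOf_eq_inv _, ← aeval_def] at this
  have hdvd : p ∣ p.reverse := by
    have := minpoly.dvd ℚ x⁻¹ (p := p.reverse) (hrev x hx0 hx)
    rwa [hminp] at this
  obtain ⟨r, hr⟩ := hdvd
  have hp0 : p ≠ 0 := hmonic.ne_zero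
  have hrev0 : p.reverse ≠ 0 := fun h => hp0 (Polynomial.reverse_eq_zero.mp h)
  have hr0 : r ≠ 0 := fun h => hrev0 (by simp [hr, h])
  have hrd : r.natDegree = 0 := by
    have := Polynomial.reverse_natDegree_le p
    rw [hr, Polynomial.natDegree_mul hp0 hr0] at this
    omega
  have h2 := hrev β hβ0 hβ
  rw [hr, map_mul] at h2
  rcases mul_eq_zero.mp h2 with h | h
  · exact h
  · exact absurd (by
      have := Polynomial.eq_C_of_natDegree_eq_zero hrd
      rw [this] at h
      simpa using h) (fun hc => hr0 (by rw [Polynomial.eq_C_of_natDegree_eq_zero hrd, hc, map_zero]))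

set_option synthInstance.maxHeartbeats 1000000 in
set_option maxHeartbeats 2000000 in
theorem stmt4 (α : ℝ) (h1 : 1 < α) (hint : IsIntegral ℤ α)
    (hconj : ∀ β : ℂ, (Polynomial.aeval β) (minpoly ℚ α) = 0 → β ≠ (α : ℂ) → ‖β‖ < 1)
    (hdeg : 2 < (minpoly ℚ α).natDegree) :
    ℚ⟮(α : ℂ)⟯ = ℚ⟮(α : ℂ) + (α : ℂ)⁻¹⟯ := by
  set αC : ℂ := (α : ℂ) with hαC
  have hα0 : (0:ℝ) < α := lt_trans one_pos h1
  have hαC0 : αC ≠ 0 := by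
    simp only [hαC, ne_eq, Complex.ofReal_eq_zero]
    exact ne_of_gt hα0
  set z : ℂ := αC + αC⁻¹ with hz
  set p : ℚ[X] := minpoly ℚ α with hp
  have hQint : IsIntegral ℚ α := hint.tower_top
  have hirr : Irreducible p := minpoly.irreducible hQint
  have hmonic : p.Monic := minpoly.monic hQint
  have hp0 : p ≠ 0 := hmonic.ne_zero
  have hminC : minpoly ℚ αC = p := by
    rw [hαC, ← Complex.coe_algebraMap]
    exact minpoly.algebraMap_eq Complex.ofReal_injective α
  have hroot : Polynomial.aeval αC p = 0 := by
    rw [← hminC]; exact minpoly.aeval ℚ αC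
  -- nonzero roots
  have hco : p.coeff 0 ≠ 0 := by
    intro hc
    obtain ⟨t, ht⟩ := Polynomial.X_dvd_iff.mpr hc
    rcases hirr.2 ht with h | h
    · exact Polynomial.not_isUnit_X h
    · have htd : t.natDegree = 0 := Polynomial.natDegree_eq_zero_of_isUnit h
      have : p.natDegree = 1 := by
        rw [ht, Polynomial.natDegree_mul Polynomial.X_ne_zero
          (fun h0 => by simp [h0] at h), Polynomial.natDegree_X, htd]
      omega
  have hnonzero : ∀ γ : ℂ, Polynomial.aeval γ p = 0 → γ ≠ 0 := by
    intro γ hγ h0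
    rw [h0] at hγ
    rw [show Polynomial.aeval (0:ℂ) p = algebraMap ℚ ℂ (p.coeff 0) by
      rw [aeval_def, eval₂_at_zero]] at hγ
    exact hco ((_root_.map_eq_zero (algebraMap ℚ ℂ)).mp hγ)
  -- Main claim : αC ∈ ℚ⟮z⟯
  have hmain : αC ∈ ℚ⟮z⟯ := by
    set K := ℚ⟮z⟯ with hK
    set z' : K := ⟨z, mem_adjoin_simple_self ℚ z⟩ with hz'
    have hzz : algebraMap K ℂ z' = z := rfl
    set q : K[X] := X ^ 2 - C z' * X + 1 with hq
    have hqmonic : q.Monic := by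
      have : (C z' * X).natDegree ≤ 1 := by compute_degree
      rw [hq]
      monicity!
    have hqdeg : q.natDegree = 2 := by
      rw [hq]
      compute_degree!
    have hqroot : Polynomial.aeval αC q = 0 := by
      simp only [hq, map_add, map_sub, map_mul, map_pow, map_one, aeval_X, aeval_C, hzz, hz]
      field_simp
      ring
    have hqroot' : Polynomial.aeval αC⁻¹ q = 0 := by
      simp only [hq, map_add, map_sub, map_mul, map_pow, map_one, aeval_X, aeval_C, hzz, hz]
      field_simp
      ring
    have hKint : IsIntegral K αC := (hQint.map (IsScalarTower.toAlgHom ℚ ℝ ℂ)).tower_top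
    have hd : minpoly K αC ∣ q := minpoly.dvd K αC hqroot
    have hdpos : 0 < (minpoly K αC).natDegree := minpoly.natDegree_pos hKint
    obtain ⟨r, hr⟩ := hd
    have hq0 : q ≠ 0 := hqmonic.ne_zero
    have hm0 : minpoly K αC ≠ 0 := minpoly.ne_zero hKint
    have hr0 : r ≠ 0 := fun h => hq0 (by rw [hr, h, mul_zero])
    have hdeg2 : (minpoly K αC).natDegree + r.natDegree = 2 := by
      rw [← hqdeg, hr, Polynomial.natDegree_mul hm0 hr0]
    rcases Nat.lt_or_ge (minpoly K αC).natDegree 2 with hlt | hge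
    · -- degree 1 : αC ∈ K
      have hd1 : (minpoly K αC).degree = 1 := by
        rw [Polynomial.degree_eq_natDegree hm0]
        exact_mod_cast (by omega : (minpoly K αC).natDegree = 1)
      obtain ⟨y, hy⟩ := minpoly.degree_eq_one_iff.mp hd1
      rw [← hy]
      exact y.2
    · -- degree 2 : minpoly K αC = q, get reciprocal conjugate, contradiction
      exfalso
      have hrd0 : r.natDegree = 0 := by omega
      have hrC : r = C (r.coeff 0) := Polynomial.eq_C_of_natDegree_eq_zero hrd0
      have hlc : (minpoly K αC).leadingCoeff * r.leadingCoeff = 1 := by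
        rw [← Polynomial.leadingCoeff_mul, ← hr, hqmonic.leadingCoeff]
      rw [(minpoly.monic hKint).leadingCoeff, one_mul] at hlc
      have hrone : r = 1 := by
        rw [hrC]
        rw [Polynomial.leadingCoeff, hrd0] at hlc
        rw [hlc, map_one]
      have hqeq : minpoly K αC = q := by rw [hr, hrone, mul_one]
      have hdq : q ∣ p.map (algebraMap ℚ K) := by
        rw [← hqeq]
        exact minpoly.dvd K αC (by rwa [aeval_map_algebraMap])
      obtain ⟨s, hs⟩ := hdq
      have h0 : Polynomial.aeval αC⁻¹ p = 0 := by
        have : Polynomial.aeval αC⁻¹ (p.map (algebraMap ℚ K)) = 0 := by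
          rw [hs, map_mul, hqroot', zero_mul]
        rwa [aeval_map_algebraMap] at this
      -- third root
      set P : ℂ[X] := p.map (algebraMap ℚ ℂ) with hP
      have hP0 : P ≠ 0 := (Polynomial.map_ne_zero_iff (algebraMap ℚ ℂ).injective).mpr hp0
      have hcard : P.roots.toFinset.card = p.natDegree := by
        rw [Multiset.toFinset_card_of_nodup (Polynomial.nodup_roots (hirr.separable.map))]
        exact IsAlgClosed.card_roots_map_eq_natDegree_of_injective p (algebraMap ℚ ℂ).injective
      have hex : ∃ β ∈ P.roots.toFinset, β ≠ αC ∧ β ≠ αC⁻¹ := by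
        by_contra hcon
        push_neg at hcon
        have hsub : P.roots.toFinset ⊆ {αC, αC⁻¹} := by
          intro β hβ
          rcases Classical.em (β = αC) with h | h
          · simp [h]
          · simp [hcon β hβ h]
        have := Finset.card_le_card hsub
        rw [hcard] at this
        have : ({αC, αC⁻¹} : Finset ℂ).card ≤ 2 := Finset.card_insert_le _ _ |>.trans (by simp)
        omega
      obtain ⟨β, hβmem, hβne1, hβne2⟩ := hex
      have hβroot : Polynomial.aeval β p = 0 := by
        have h := (Polynomial.mem_roots hP0).mp (Multiset.mem_toFinset.mp hβmem)
        rw [aeval_def, ← Polynomial.eval_map]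
        exact h
      have hβ0 : β ≠ 0 := hnonzero β hβroot
      have hβlt : ‖β‖ < 1 := hconj β hβroot hβne1
      have hβinv : Polynomial.aeval β⁻¹ p = 0 :=
        recip_root p hmonic hirr αC hαC0 hroot h0 β hβ0 hβroot
      have hβinvne : β⁻¹ ≠ αC := by
        intro h
        exact hβne2 (by rw [← h, inv_inv])
      have h2 : ‖β⁻¹‖ < 1 := hconj β⁻¹ hβinv hβinvne
      rw [norm_inv] at h2
      have hβpos : 0 < ‖β‖ := norm_pos_iff.mpr hβ0
      have hip : 0 < ‖β‖⁻¹ := inv_pos.mpr hβpos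
      have hmc : ‖β‖ * ‖β‖⁻¹ = 1 := mul_inv_cancel₀ (ne_of_gt hβpos)
      have h3 : ‖β‖ * ‖β‖⁻¹ < ‖β‖ * 1 := mul_lt_mul_of_pos_left h2 hβpos
      rw [hmc, mul_one] at h3
      linarith
  -- conclude
  apply le_antisymm
  · exact adjoin_simple_le_iff.mpr hmain
  · apply adjoin_simple_le_iff.mpr
    exact add_mem (mem_adjoin_simple_self ℚ αC) (inv_mem (mem_adjoin_simple_self ℚ αC))
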